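/- Let X be a topological space, f : X → ℝ a continuous function that is inf-connected (i.e., f^{-1}((−∞, r)) is connected for every r ∈ ℝ), and let c ∈ ℝ. Then for every continuous surjective open map g : Z → X from a topological space Z such that g^{-1}(x) is connected for each x in a dense subset of X, the set {z ∈ Z : f(g(z)) < c} is connected (whenever nonempty). -/
import Mathlib


open Set

/-- Key step in the proof of Theorem 2.1: preimages of strict sublevel sets of a
continuous inf-connected function under a continuous open surjection with
connected fibers over a dense set are connected. -/
theorem stmt8 {X Z : Type*} [TopologicalSpace X] [TopologicalSpace Z]
    (f : X → ℝ) (hf : Continuous f)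
    (hinf : ∀ r : ℝ, IsPreconnected (f ⁻¹' Iio r))
    (c : ℝ)
    (g : Z → X) (hg : Continuous g) (hgsurj : Function.Surjective g)
    (hgopen : IsOpenMap g)
    (hfib : ∃ D : Set X, Dense D ∧ ∀ x ∈ D, IsConnected (g ⁻¹' {x}))
    (hne : {z : Z | f (g z) < c}.Nonempty) :
    IsConnected {z : Z | f (g z) < c} := by
  obtain ⟨D, hD, hfibD⟩ := hfib
  set S : Set Z := {z : Z | f (g z) < c} with hSdef
  set U : Set X := f ⁻¹' Iio c with hUdef
  have hSU : S = g ⁻¹' U := rfl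
  have hSopen : IsOpen S := (isOpen_Iio.preimage (hf.comp hg))
  refine ⟨hne, ?_⟩
  intro u v hu hv hcov hu' hv'
  by_contra hempty
  rw [Set.not_nonempty_iff_eq_empty] at hempty
  have hAopen : IsOpen (g '' (S ∩ u)) := hgopen _ (hSopen.inter hu)
  have hBopen : IsOpen (g '' (S ∩ v)) := hgopen _ (hSopen.inter hv)
  have hcovU : U ⊆ g '' (S ∩ u) ∪ g '' (S ∩ v) := by
    intro x hx
    obtain ⟨z, rfl⟩ := hgsurj x
    have hz : z ∈ S := hx
    rcases hcov hz with h | h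
    · exact Or.inl ⟨z, ⟨hz, h⟩, rfl⟩
    · exact Or.inr ⟨z, ⟨hz, h⟩, rfl⟩
  have hA' : (U ∩ g '' (S ∩ u)).Nonempty := by
    obtain ⟨z, hzS, hzu⟩ := hu'
    exact ⟨g z, hzS, ⟨z, ⟨hzS, hzu⟩, rfl⟩⟩
  have hB' : (U ∩ g '' (S ∩ v)).Nonempty := by
    obtain ⟨z, hzS, hzv⟩ := hv'
    exact ⟨g z, hzS, ⟨z, ⟨hzS, hzv⟩, rfl⟩⟩
  obtain ⟨x, hxU, hxA, hxB⟩ := hinf c _ _ hAopen hBopen hcovU hA' hB'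
  -- A ∩ B is open and nonempty; find a point of D inside it
  have hABopen : IsOpen (g '' (S ∩ u) ∩ g '' (S ∩ v)) := hAopen.inter hBopen
  obtain ⟨y, hyAB, hyD⟩ := hD.inter_open_nonempty _ hABopen ⟨x, hxA, hxB⟩
  obtain ⟨hyA, hyB⟩ := hyAB
  have hyU : y ∈ U := by
    obtain ⟨z, ⟨hzS, _⟩, rfl⟩ := hyA
    exact hzS
  have hfiby := hfibD y hyD
  have hfibS : g ⁻¹' {y} ⊆ S := by
    intro z hz
    simp only [mem_preimage, mem_singleton_iff] at hz
    show f (g z) < c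
    rw [hz]; exact hyU
  have hfibcov : g ⁻¹' {y} ⊆ u ∪ v := fun z hz => hcov (hfibS hz)
  have hfibu : (g ⁻¹' {y} ∩ u).Nonempty := by
    obtain ⟨z, ⟨_, hzu⟩, hzy⟩ := hyA
    exact ⟨z, hzy, hzu⟩
  have hfibv : (g ⁻¹' {y} ∩ v).Nonempty := by
    obtain ⟨z, ⟨_, hzv⟩, hzy⟩ := hyB
    exact ⟨z, hzy, hzv⟩
  obtain ⟨z, hz1, hz2⟩ := hfiby.isPreconnected _ _ hu hv hfibcov hfibu hfibv
  have : z ∈ S ∩ (u ∩ v) := ⟨hfibS hz1, hz2⟩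
  rw [hempty] at this
  exact this
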